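/- For integers n ≥ r+1 ≥ 2, one has r - n/2 + (1/(n+1))·∑_{c=r+1}^{n} (-1)^{c+r+1}·C(c-2, r-1)·C(n+1, c+1) = r(r+1)/(2(n+1)), as an identity of rational numbers. -/

import Mathlib

open Finset

/-- Alternating sum identity: `∑_j (-1)^j C(k+j,k) C(m,k+j) = 0` for `k < m`. -/
lemma lemE (k m : ℕ) (h : k < m) :
    ∑ j ∈ Finset.range (m - k + 1),
      (-1 : ℚ) ^ j * ((k + j).choose k) * (m.choose (k + j)) = 0 := by
  have key : ∀ j ∈ Finset.range (m - k + 1),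
      (-1 : ℚ) ^ j * ((k + j).choose k) * (m.choose (k + j))
        = (m.choose k : ℚ) * ((-1 : ℚ) ^ j * ((m - k).choose j)) := by
    intro j hj
    simp only [Finset.mem_range] at hj
    have hjm : k + j ≤ m := by omega
    have := Nat.choose_mul (n := m) (k := k + j) (s := k) (Nat.le_add_right _ _)
    have h2 : m.choose (k + j) * (k + j).choose k = m.choose k * (m - k).choose j := by
      simpa using this
    have h3 : ((m.choose (k + j) : ℚ)) * ((k + j).choose k : ℚ)
        = (m.choose k : ℚ) * ((m - k).choose j : ℚ) := by
      exact_mod_cast congrArg (Nat.cast : ℕ → ℚ) h2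
    linear_combination (-1 : ℚ) ^ j * h3
  rw [Finset.sum_congr rfl key, ← Finset.mul_sum]
  have hmk : m - k ≠ 0 := by omega
  have := Int.alternating_sum_range_choose_of_ne (n := m - k) hmk
  have hq : ∑ j ∈ Finset.range (m - k + 1), (-1 : ℚ) ^ j * ((m - k).choose j) = 0 := by
    exact_mod_cast congrArg (Int.cast : ℤ → ℚ) this
  rw [hq, mul_zero]

lemma lemD (k n : ℕ) (h : k + 1 ≤ n) :
    ∑ j ∈ Finset.range (n + 1 - k),
      (-1 : ℚ) ^ j * ((k + j).choose k) * ((n + 1).choose (k + 1 + j)) = 1 := by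
  induction n with
  | zero => omega
  | succ n ih =>
    rcases Nat.lt_or_ge (k + 1) (n + 1) with hlt | hge
    · -- step: n ≥ k+1
      have hkn : k + 1 ≤ n := by omega
      have split : ∀ j ∈ Finset.range (n + 2 - k),
          (-1 : ℚ) ^ j * ((k + j).choose k) * ((n + 2).choose (k + 1 + j))
            = (-1 : ℚ) ^ j * ((k + j).choose k) * ((n + 1).choose (k + j))
              + (-1 : ℚ) ^ j * ((k + j).choose k) * ((n + 1).choose (k + 1 + j)) := by
        intro j _
        have hps : (n + 2).choose (k + 1 + j)
            = (n + 1).choose (k + j) + (n + 1).choose (k + 1 + j) := by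
          rw [show k + 1 + j = (k + j) + 1 by ring]
          exact Nat.choose_succ_succ' (n + 1) (k + j)
        rw [hps]
        push_cast
        ring
      rw [Finset.sum_congr rfl split, Finset.sum_add_distrib]
      have e1 : ∑ j ∈ Finset.range (n + 2 - k),
          (-1 : ℚ) ^ j * ((k + j).choose k) * ((n + 1).choose (k + j)) = 0 := by
        have := lemE k (n + 1) (by omega)
        have hr : n + 1 - k + 1 = n + 2 - k := by omega
        rwa [hr] at this
      have e2 : ∑ j ∈ Finset.range (n + 2 - k),
          (-1 : ℚ) ^ j * ((k + j).choose k) * ((n + 1).choose (k + 1 + j)) = 1 := by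
        have hr : n + 2 - k = (n + 1 - k) + 1 := by omega
        rw [hr, Finset.sum_range_succ, ih hkn]
        have hz : (n + 1).choose (k + 1 + (n + 1 - k)) = 0 :=
          Nat.choose_eq_zero_of_lt (by omega)
        rw [hz]
        push_cast
        ring
      rw [e1, e2, zero_add]
    · -- base: n + 1 = k + 1
      have hnk : n = k := by omega
      subst hnk
      have hr : n + 2 - n = 2 := by omega
      rw [hr]
      simp [Finset.sum_range_succ, Nat.choose_succ_self_right]

lemma lemB (k n : ℕ) (h : k + 1 ≤ n) :
    ∑ j ∈ Finset.range (n - k),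
      (-1 : ℚ) ^ j * ((k + j).choose k) * ((n + 1).choose (k + 2 + j)) = (n : ℚ) - k := by
  induction n with
  | zero => omega
  | succ n ih =>
    rcases Nat.lt_or_ge (k + 1) (n + 1) with hlt | hge
    · have hkn : k + 1 ≤ n := by omega
      have split : ∀ j ∈ Finset.range (n + 1 - k),
          (-1 : ℚ) ^ j * ((k + j).choose k) * ((n + 2).choose (k + 2 + j))
            = (-1 : ℚ) ^ j * ((k + j).choose k) * ((n + 1).choose (k + 1 + j))
              + (-1 : ℚ) ^ j * ((k + j).choose k) * ((n + 1).choose (k + 2 + j)) := by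
        intro j _
        have : (n + 2).choose (k + 1 + j + 1)
            = (n + 1).choose (k + 1 + j) + (n + 1).choose (k + 1 + j + 1) :=
          Nat.choose_succ_succ' (n + 1) (k + 1 + j)
        rw [show k + 2 + j = k + 1 + j + 1 by ring, this]
        push_cast
        ring
      rw [Finset.sum_congr rfl split, Finset.sum_add_distrib]
      have e1 : ∑ j ∈ Finset.range (n + 1 - k),
          (-1 : ℚ) ^ j * ((k + j).choose k) * ((n + 1).choose (k + 1 + j)) = 1 :=
        lemD k n hkn
      have e2 : ∑ j ∈ Finset.range (n + 1 - k),
          (-1 : ℚ) ^ j * ((k + j).choose k) * ((n + 1).choose (k + 2 + j))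
            = (n : ℚ) - k := by
        have hr : n + 1 - k = (n - k) + 1 := by omega
        rw [hr, Finset.sum_range_succ, ih hkn]
        have hz : (n + 1).choose (k + 2 + (n - k)) = 0 :=
          Nat.choose_eq_zero_of_lt (by omega)
        rw [hz]
        push_cast
        ring
      rw [e1, e2]
      push_cast
      ring
    · have hnk : n = k := by omega
      subst hnk
      have hr : n + 1 - n = 1 := by omega
      rw [hr]
      simp [Finset.sum_range_succ]

lemma lemS (k n : ℕ) (h : k + 2 ≤ n) :
    ∑ j ∈ Finset.range (n - k - 1),
      (-1 : ℚ) ^ j * ((k + j).choose k) * ((n + 1).choose (k + 3 + j))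
      = ((n : ℚ) - k - 1) * ((n : ℚ) - k) / 2 := by
  induction n with
  | zero => omega
  | succ n ih =>
    rcases Nat.lt_or_ge (k + 2) (n + 1) with hlt | hge
    · have hkn : k + 2 ≤ n := by omega
      have split : ∀ j ∈ Finset.range (n - k),
          (-1 : ℚ) ^ j * ((k + j).choose k) * ((n + 2).choose (k + 3 + j))
            = (-1 : ℚ) ^ j * ((k + j).choose k) * ((n + 1).choose (k + 2 + j))
              + (-1 : ℚ) ^ j * ((k + j).choose k) * ((n + 1).choose (k + 3 + j)) := by
        intro j _
        have : (n + 2).choose (k + 2 + j + 1)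
            = (n + 1).choose (k + 2 + j) + (n + 1).choose (k + 2 + j + 1) :=
          Nat.choose_succ_succ' (n + 1) (k + 2 + j)
        rw [show k + 3 + j = k + 2 + j + 1 by ring, this]
        push_cast
        ring
      have hrange : n + 1 - k - 1 = n - k := by omega
      rw [hrange, Finset.sum_congr rfl split, Finset.sum_add_distrib]
      have e1 : ∑ j ∈ Finset.range (n - k),
          (-1 : ℚ) ^ j * ((k + j).choose k) * ((n + 1).choose (k + 2 + j))
            = (n : ℚ) - k := lemB k n (by omega)
      have e2 : ∑ j ∈ Finset.range (n - k),
          (-1 : ℚ) ^ j * ((k + j).choose k) * ((n + 1).choose (k + 3 + j))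
            = ((n : ℚ) - k - 1) * ((n : ℚ) - k) / 2 := by
        have hr : n - k = (n - k - 1) + 1 := by omega
        rw [hr, Finset.sum_range_succ, ih hkn]
        have hz : (n + 1).choose (k + 3 + (n - k - 1)) = 0 :=
          Nat.choose_eq_zero_of_lt (by omega)
        rw [hz]
        push_cast
        ring
      rw [e1, e2]
      push_cast
      ring
    · have hnk : n = k + 1 := by omega
      subst hnk
      have hr : k + 1 + 1 - k - 1 = 1 := by omega
      rw [hr]
      simp [Finset.sum_range_succ]
      ring

/-- For integers `n ≥ r+1 ≥ 2`,
`r - n/2 + (1/(n+1))·∑_{c=r+1}^{n} (-1)^{c+r+1} C(c-2,r-1) C(n+1,c+1) = r(r+1)/(2(n+1))`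
as rational numbers. -/
theorem stmt_6 (n r : ℕ) (hr : 1 ≤ r) (h : r + 1 ≤ n) :
    (r : ℚ) - (n : ℚ) / 2
      + (1 / ((n : ℚ) + 1)) * ∑ c ∈ Finset.Icc (r + 1) n,
          (-1 : ℚ) ^ (c + r + 1) * ((c - 2).choose (r - 1)) * ((n + 1).choose (c + 1))
      = (r : ℚ) * ((r : ℚ) + 1) / (2 * ((n : ℚ) + 1)) := by
  obtain ⟨k, rfl⟩ : ∃ k, r = k + 1 := ⟨r - 1, by omega⟩
  have hicc : Finset.Icc (k + 1 + 1) n = Finset.Ico (k + 2) (n + 1) := by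
    rw [Finset.Ico_add_one_right_eq_Icc]
  have hsum : ∑ c ∈ Finset.Icc (k + 1 + 1) n,
      (-1 : ℚ) ^ (c + (k + 1) + 1) * ((c - 2).choose (k + 1 - 1)) * ((n + 1).choose (c + 1))
      = ∑ j ∈ Finset.range (n - k - 1),
        (-1 : ℚ) ^ j * ((k + j).choose k) * ((n + 1).choose (k + 3 + j)) := by
    rw [hicc, Finset.sum_Ico_eq_sum_range]
    have hr2 : n + 1 - (k + 2) = n - k - 1 := by omega
    rw [hr2]
    apply Finset.sum_congr rfl
    intro j _
    have hsign : (-1 : ℚ) ^ (k + 2 + j + (k + 1) + 1) = (-1 : ℚ) ^ j := by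
      rw [show k + 2 + j + (k + 1) + 1 = j + 2 * (k + 2) by ring, pow_add, pow_mul]
      simp
    have hsub : k + 2 + j - 2 = k + j := by omega
    have hsub2 : k + 1 - 1 = k := by omega
    have hc1 : k + 2 + j + 1 = k + 3 + j := by ring
    rw [hsign, hsub, hsub2, hc1]
  rw [hsum, lemS k n (by omega)]
  have hn1 : (n : ℚ) + 1 ≠ 0 := by positivity
  push_cast
  field_simp
  ring
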